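/- Let A be a Marot commutative ring. Then A is a Dedekind ring (i.e., every regular ideal of A is a product of prime ideals) if and only if A is a regular-Noetherian ISP-ring (i.e., an ISP-ring in which every regular ideal is finitely generated). -/

import Mathlib

/-- An ideal is *regular* if it contains a regular element (a non-zero-divisor). -/
def Ideal.IsRegularIdeal {A : Type*} [CommRing A] (I : Ideal A) : Prop :=
  ∃ a ∈ I, a ∈ nonZeroDivisors A

/-- An ideal is *invertible* if it is regular, finitely generated and locally principal. -/
def Ideal.IsInvertibleIdeal {A : Type*} [CommRing A] (J : Ideal A) : Prop :=
  J.IsRegularIdeal ∧ J.FG ∧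
    ∀ M : Ideal A, ∀ hM : M.IsMaximal,
      haveI := hM.isPrime
      (J.map (algebraMap A (Localization.AtPrime M))).IsPrincipal

/-- `I` can be written as an invertible ideal times a nonempty product of
proper radical ideals. -/
def Ideal.HasISPFactorization {A : Type*} [CommRing A] (I : Ideal A) : Prop :=
  ∃ (J : Ideal A) (L : List (Ideal A)), J.IsInvertibleIdeal ∧ L ≠ [] ∧
    (∀ H ∈ L, H ≠ ⊤ ∧ H.IsRadical) ∧ I = J * L.prod

/-- An ISP-ring: every proper regular ideal factors as an invertible ideal times a
nonempty product of proper radical ideals. -/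
def IsISPRing (A : Type*) [CommRing A] : Prop :=
  ∀ I : Ideal A, I ≠ ⊤ → I.IsRegularIdeal → I.HasISPFactorization

/-- A strongly ISP-ring: every proper ideal factors as an invertible ideal times a
nonempty product of proper radical ideals. -/
def IsStronglyISPRing (A : Type*) [CommRing A] : Prop :=
  ∀ I : Ideal A, I ≠ ⊤ → I.HasISPFactorization

/-- An ISP-domain: an integral domain in which every proper nonzero ideal factors as an
invertible ideal times a nonempty product of proper radical ideals. -/
def IsISPDomain (A : Type*) [CommRing A] : Prop :=
  IsDomain A ∧ ∀ I : Ideal A, I ≠ ⊤ → I ≠ ⊥ → I.HasISPFactorization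

/-- A Marot ring: every regular ideal is generated by the regular elements it contains. -/
def IsMarotRing (A : Type*) [CommRing A] : Prop :=
  ∀ I : Ideal A, I.IsRegularIdeal →
    I = Ideal.span ((I : Set A) ∩ (nonZeroDivisors A : Set A))

namespace ISPAux

variable {R : Type*} [CommRing R]

/-- coercion of an ideal to a submodule of the total fraction ring -/
noncomputable def coeS (I : Ideal R) : Submodule R (FractionRing R) :=
  Submodule.map (Algebra.ofId R (FractionRing R)).toLinearMap I

lemma mem_coeS {I : Ideal R} {x : FractionRing R} :
    x ∈ coeS I ↔ ∃ a ∈ I, algebraMap R (FractionRing R) a = x := by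
  simp [coeS, Submodule.mem_map, Algebra.ofId_apply]

lemma algMap_mem_coeS {I : Ideal R} {a : R} (ha : a ∈ I) :
    algebraMap R (FractionRing R) a ∈ coeS I := mem_coeS.mpr ⟨a, ha, rfl⟩

lemma coeS_mul (I J : Ideal R) : coeS (I * J) = coeS I * coeS J :=
  Submodule.map_mul I J (Algebra.ofId R (FractionRing R))

lemma coeS_mono {I J : Ideal R} (h : I ≤ J) : coeS I ≤ coeS J :=
  Submodule.map_mono h

lemma algMap_inj : Function.Injective (algebraMap R (FractionRing R)) :=
  IsFractionRing.injective R (FractionRing R)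

lemma coeS_inj {I J : Ideal R} (h : coeS I = coeS J) : I = J := by
  ext a
  constructor
  · intro ha
    obtain ⟨b, hb, hba⟩ := mem_coeS.mp (h ▸ algMap_mem_coeS ha)
    exact algMap_inj hba ▸ hb
  · intro ha
    obtain ⟨b, hb, hba⟩ := mem_coeS.mp (h.symm ▸ algMap_mem_coeS ha)
    exact algMap_inj hba ▸ hb

lemma coeS_le_one (I : Ideal R) : coeS I ≤ 1 := by
  rintro x hx
  obtain ⟨a, -, rfl⟩ := mem_coeS.mp hx
  exact Submodule.mem_one.mpr ⟨a, rfl⟩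

lemma coeS_top : coeS (⊤ : Ideal R) = 1 := by
  refine le_antisymm (coeS_le_one _) ?_
  rintro x hx
  obtain ⟨a, rfl⟩ := Submodule.mem_one.mp hx
  exact algMap_mem_coeS trivial

lemma coeS_span_singleton (x : R) :
    coeS (Ideal.span {x}) = Submodule.span R {algebraMap R (FractionRing R) x} := by
  rw [coeS, show ((Ideal.span {x} : Ideal R) : Submodule R R) = Submodule.span R {x} from
    (Ideal.submodule_span_eq).symm, Submodule.map_span]
  simp [Algebra.ofId_apply]

/-- invertibility of an ideal as a submodule of the total quotient ring -/
def Inv (I : Ideal R) : Prop :=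
  ∃ T : Submodule R (FractionRing R), coeS I * T = 1

lemma inv_top : Inv (⊤ : Ideal R) := ⟨1, by rw [coeS_top, one_mul]⟩

lemma inv_span_singleton {x : R} (hx : x ∈ nonZeroDivisors R) : Inv (Ideal.span {x}) := by
  have hu : IsUnit (algebraMap R (FractionRing R) x) :=
    IsLocalization.map_units (FractionRing R) ⟨x, hx⟩
  refine ⟨Submodule.span R {((hu.unit⁻¹ : _) : FractionRing R)}, ?_⟩
  rw [coeS_span_singleton, Submodule.span_mul_span, Set.singleton_mul_singleton,
    IsUnit.mul_val_inv, ← Submodule.one_eq_span]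

lemma inv_cancel {P X Y : Ideal R} (h : Inv P) (hxy : P * X = P * Y) : X = Y := by
  obtain ⟨T, hT⟩ := h
  apply coeS_inj
  have := congrArg coeS hxy
  rw [coeS_mul, coeS_mul] at this
  calc coeS X = coeS P * T * coeS X := by rw [hT, one_mul]
    _ = T * (coeS P * coeS X) := by ring
    _ = T * (coeS P * coeS Y) := by rw [this]
    _ = coeS P * T * coeS Y := by ring
    _ = coeS Y := by rw [hT, one_mul]


lemma exists_rep {P : Ideal R} {T : Submodule R (FractionRing R)} {x : FractionRing R}
    (hx : x ∈ coeS P * T) :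
    ∃ l : List (R × FractionRing R), (∀ p ∈ l, p.1 ∈ P ∧ p.2 ∈ T) ∧
      x = (l.map fun p => algebraMap R (FractionRing R) p.1 * p.2).sum := by
  refine Submodule.mul_induction_on hx ?_ ?_
  · intro m hm n hn
    obtain ⟨a, ha, rfl⟩ := mem_coeS.mp hm
    exact ⟨[(a, n)], by simp [ha, hn], by simp⟩
  · rintro a b ⟨l1, h1, rfl⟩ ⟨l2, h2, rfl⟩
    refine ⟨l1 ++ l2, ?_, by simp⟩
    intro p hp
    rcases List.mem_append.mp hp with h | h
    exacts [h1 p h, h2 p h]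

lemma list_sum_repr {P : Ideal R} {T : Submodule R (FractionRing R)} (hT : coeS P * T = 1)
    {b : R} (hb : b ∈ P) :
    ∀ l : List (R × FractionRing R), (∀ p ∈ l, p.1 ∈ P ∧ p.2 ∈ T) →
    ∃ c ∈ Ideal.span {a : R | a ∈ l.map Prod.fst},
      algebraMap R (FractionRing R) c
        = (l.map fun p => algebraMap R (FractionRing R) p.1 * p.2).sum
            * algebraMap R (FractionRing R) b := by
  intro l
  induction l with
  | nil => exact fun _ => ⟨0, Ideal.zero_mem _, by simp⟩
  | cons p l ih =>
    intro hl
    obtain ⟨c', hc', hc'eq⟩ := ih (fun q hq => hl q (List.mem_cons_of_mem _ hq))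
    have hp2b : p.2 * algebraMap R (FractionRing R) b ∈ (1 : Submodule R (FractionRing R)) := by
      rw [← hT, mul_comm (coeS P) T]
      exact Submodule.mul_mem_mul (hl p (List.mem_cons_self) |>.2) (algMap_mem_coeS hb)
    obtain ⟨d, hd⟩ := Submodule.mem_one.mp hp2b
    refine ⟨p.1 * d + c', ?_, ?_⟩
    · apply Ideal.add_mem
      · exact Ideal.mul_mem_right _ _ (Ideal.subset_span (by simp))
      · exact Ideal.span_mono (fun a ha => by simpa using Or.inr (by simpa using ha)) hc'
    · rw [map_add, map_mul, hd, hc'eq]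
      simp only [List.map_cons, List.sum_cons, add_mul]
      ring

lemma fg_of_inv {P : Ideal R} (h : Inv P) : P.FG := by
  classical
  obtain ⟨T, hT⟩ := h
  have h1 : (1 : FractionRing R) ∈ coeS P * T := by
    rw [hT]; exact Submodule.mem_one.mpr ⟨1, map_one _⟩
  obtain ⟨l, hl, hsum⟩ := exists_rep h1
  refine ⟨(l.map Prod.fst).toFinset, ?_⟩
  apply le_antisymm
  · rw [Ideal.span_le]
    intro a ha
    rw [List.coe_toFinset] at ha
    obtain ⟨p, hp, rfl⟩ := List.mem_map.mp ha
    exact (hl p hp).1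
  · intro b hb
    obtain ⟨c, hc, hceq⟩ := list_sum_repr hT hb l hl
    have : algebraMap R (FractionRing R) c = algebraMap R (FractionRing R) b := by
      rw [hceq, ← hsum, one_mul]
    rw [← algMap_inj this]
    refine Ideal.span_mono ?_ hc
    intro a ha
    rw [List.coe_toFinset]
    exact ha

lemma multiset_prod_le_of_mem {s : Multiset (Ideal R)} {P : Ideal R} (h : P ∈ s) :
    s.prod ≤ P := by
  classical
  rw [← Multiset.prod_erase h]
  exact Ideal.mul_le_left

lemma inv_of_mul_inv {P Q : Ideal R} (h : Inv (P * Q)) : Inv P := by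
  obtain ⟨T, hT⟩ := h
  exact ⟨coeS Q * T, by rw [← mul_assoc, ← coeS_mul, hT]⟩

lemma inv_of_mem_prod {s : Multiset (Ideal R)} {P : Ideal R} (hP : P ∈ s) (h : Inv s.prod) :
    Inv P := by
  classical
  rw [← Multiset.prod_erase hP] at h
  exact inv_of_mul_inv h

lemma exists_minimal_mem {s : Multiset (Ideal R)} (hs : s ≠ 0) :
    ∃ P ∈ s, ∀ Q ∈ s, Q ≤ P → Q = P := by
  obtain ⟨a, ha⟩ := Multiset.exists_mem_of_ne_zero hs
  obtain ⟨P, hP⟩ := Set.Finite.exists_minimal (s := {Q | Q ∈ s})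
    (s.finite_toSet) ⟨a, ha⟩
  exact ⟨P, hP.prop, fun Q hQ hle => hP.eq_of_le hQ hle⟩

/-- Uniqueness of factorization into invertible primes. -/
lemma prime_factorization_unique (s : Multiset (Ideal R))
    (hs : ∀ P ∈ s, P.IsPrime ∧ Inv P) :
    ∀ t : Multiset (Ideal R), (∀ P ∈ t, P.IsPrime ∧ Inv P) → s.prod = t.prod → s = t := by
  induction s using Multiset.strongInductionOn with
  | ih s ih =>
    intro t ht hprod
    rcases eq_or_ne s 0 with rfl | hs0
    · by_contra hne
      obtain ⟨Q, hQ⟩ := Multiset.exists_mem_of_ne_zero (Ne.symm hne)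
      have : (⊤ : Ideal R) ≤ Q := by
        rw [show (⊤ : Ideal R) = (0 : Multiset (Ideal R)).prod by rw [Multiset.prod_zero, Ideal.one_eq_top], hprod]
        exact multiset_prod_le_of_mem hQ
      exact (ht Q hQ).1.ne_top (top_le_iff.mp this)
    · obtain ⟨P, hPs, hPmin⟩ := exists_minimal_mem hs0
      have h1 : t.prod ≤ P := hprod ▸ multiset_prod_le_of_mem hPs
      obtain ⟨Q, hQt, hQP⟩ := (Ideal.IsPrime.multiset_prod_le (hs P hPs).1).mp h1
      obtain ⟨P', hP's, hP'Q⟩ :=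
        (Ideal.IsPrime.multiset_prod_le (ht Q hQt).1).mp
          (hprod ▸ multiset_prod_le_of_mem hQt)
      have hPP' : P' = P := hPmin P' hP's (le_trans hP'Q hQP)
      have hQeq : Q = P := le_antisymm hQP (hPP' ▸ hP'Q)
      classical
      have hQt' : P ∈ t := hQeq ▸ hQt
      have hcancel : (s.erase P).prod = (t.erase P).prod := by
        apply inv_cancel (hs P hPs).2
        rw [Multiset.prod_erase hPs, Multiset.prod_erase hQt', hprod]
      have herase := ih (s.erase P) (Multiset.erase_lt.mpr hPs)
        (fun X hX => hs X (Multiset.mem_of_mem_erase hX)) (t.erase P)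
        (fun X hX => ht X (Multiset.mem_of_mem_erase hX)) hcancel
      rw [← Multiset.cons_erase hPs, ← Multiset.cons_erase hQt', herase]


lemma map_multiset_prod {S : Type*} [CommRing S] (f : R →+* S) (s : Multiset (Ideal R)) :
    (s.prod).map f = (s.map (Ideal.map f)).prod := by
  induction s using Multiset.induction with
  | empty => simp [Ideal.one_eq_top, Ideal.map_top]
  | cons a s ih => simp [Ideal.map_mul, ih]

/-- A regular invertible prime is maximal in a ring where regular ideals factor into primes. -/
lemma inv_prime_maximal
    (hZPI : ∀ I : Ideal R, I.IsRegularIdeal →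
      ∃ L : List (Ideal R), (∀ P ∈ L, P.IsPrime) ∧ I = L.prod)
    {P : Ideal R} (hP : P.IsPrime) (hreg : P.IsRegularIdeal) (hinv : Inv P) :
    P.IsMaximal := by
  -- main step : for `a ∉ P`, `P ⊔ span {a} = ⊤`
  have key : ∀ a : R, a ∉ P → P ⊔ Ideal.span {a} = ⊤ := by
    intro a ha
    set I₁ := P ⊔ Ideal.span {a} with hI₁
    set I₂ := P ⊔ Ideal.span {a ^ 2} with hI₂
    obtain ⟨r, hrP, hrreg⟩ := hreg
    obtain ⟨L₁, hL₁p, hL₁⟩ := hZPI I₁ ⟨r, Ideal.mem_sup_left hrP, hrreg⟩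
    obtain ⟨L₂, hL₂p, hL₂⟩ := hZPI I₂ ⟨r, Ideal.mem_sup_left hrP, hrreg⟩
    set D := R ⧸ P
    set π : R →+* D := Ideal.Quotient.mk P
    have hπs : Function.Surjective π := Ideal.Quotient.mk_surjective
    have hDdom : IsDomain D := Ideal.Quotient.isDomain P
    have haz : π a ≠ 0 := fun h => ha (Ideal.Quotient.eq_zero_iff_mem.mp h)
    have hareg : π a ∈ nonZeroDivisors D := mem_nonZeroDivisors_of_ne_zero haz
    -- the members of L₁, L₂ contain P
    have hL₁P : ∀ Q ∈ (L₁ : Multiset (Ideal R)), P ≤ Q := by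
      intro Q hQ
      have h := multiset_prod_le_of_mem hQ
      rw [Multiset.prod_coe, ← hL₁] at h
      exact le_trans le_sup_left h
    have hL₂P : ∀ Q ∈ (L₂ : Multiset (Ideal R)), P ≤ Q := by
      intro Q hQ
      have h := multiset_prod_le_of_mem hQ
      rw [Multiset.prod_coe, ← hL₂] at h
      exact le_trans le_sup_left h
    -- push forward to D
    set M₁ : Multiset (Ideal D) := (L₁ : Multiset (Ideal R)).map (Ideal.map π) with hM₁def
    set M₂ : Multiset (Ideal D) := (L₂ : Multiset (Ideal R)).map (Ideal.map π) with hM₂def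
    have hmapP : Ideal.map π P = ⊥ := Ideal.map_quotient_self P
    have hM₁prod : M₁.prod = Ideal.span {π a} := by
      rw [← map_multiset_prod, show ((L₁ : Multiset (Ideal R))).prod = I₁ by
        rw [Multiset.prod_coe]; exact hL₁.symm]
      rw [hI₁, Ideal.map_sup, hmapP, Ideal.map_span, Set.image_singleton, bot_sup_eq]
    have hM₂prod : M₂.prod = Ideal.span {π a} * Ideal.span {π a} := by
      rw [← map_multiset_prod, show ((L₂ : Multiset (Ideal R))).prod = I₂ by
        rw [Multiset.prod_coe]; exact hL₂.symm]
      rw [hI₂, Ideal.map_sup, hmapP, Ideal.map_span, Set.image_singleton, bot_sup_eq,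
        Ideal.span_singleton_mul_span_singleton, map_pow, pow_two]
    have hM₁ : ∀ Q ∈ M₁, Q.IsPrime ∧ Inv Q := by
      intro Q hQ
      obtain ⟨Q₀, hQ₀, rfl⟩ := Multiset.mem_map.mp hQ
      constructor
      · haveI : Q₀.IsPrime := hL₁p Q₀ (by exact_mod_cast hQ₀)
        exact Ideal.map_isPrime_of_surjective hπs (by rw [Ideal.mk_ker]; exact hL₁P Q₀ hQ₀)
      · exact inv_of_mem_prod hQ (hM₁prod ▸ inv_span_singleton hareg)
    have hM₂ : ∀ Q ∈ M₂, Q.IsPrime ∧ Inv Q := by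
      intro Q hQ
      obtain ⟨Q₀, hQ₀, rfl⟩ := Multiset.mem_map.mp hQ
      constructor
      · haveI : Q₀.IsPrime := hL₂p Q₀ (by exact_mod_cast hQ₀)
        exact Ideal.map_isPrime_of_surjective hπs (by rw [Ideal.mk_ker]; exact hL₂P Q₀ hQ₀)
      · refine inv_of_mem_prod hQ (hM₂prod ▸ ?_)
        have := inv_span_singleton (mul_mem hareg hareg)
        rwa [← Ideal.span_singleton_mul_span_singleton] at this
    -- uniqueness gives M₂ = M₁ + M₁
    have hM₂eq : M₂ = M₁ + M₁ := by
      refine prime_factorization_unique M₂ hM₂ (M₁ + M₁) ?_ ?_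
      · intro Q hQ
        rcases Multiset.mem_add.mp hQ with h | h
        exacts [hM₁ Q h, hM₁ Q h]
      · rw [hM₂prod, Multiset.prod_add, hM₁prod]
    -- pull back : L₂ = L₁ + L₁ as multisets
    have hpull : (L₂ : Multiset (Ideal R)) = (L₁ : Multiset (Ideal R)) + L₁ := by
      have h2 := congrArg (Multiset.map (Ideal.comap π)) hM₂eq
      rw [hM₁def, hM₂def] at h2
      simp only [Multiset.map_map, Multiset.map_add] at h2
      have hcomap : ∀ (L : Multiset (Ideal R)), (∀ Q ∈ L, P ≤ Q) →
          L.map (Ideal.comap π ∘ Ideal.map π) = L := by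
        intro L hL
        have hmc : L.map (Ideal.comap π ∘ Ideal.map π) = L.map id := by
          refine Multiset.map_congr rfl ?_
          intro Q hQ
          simp only [Function.comp_apply, id_eq]
          rw [Ideal.comap_map_of_surjective π hπs, ← RingHom.ker_eq_comap_bot, Ideal.mk_ker,
            sup_eq_left.mpr (hL Q hQ)]
        rw [hmc, Multiset.map_id]
      rw [hcomap _ hL₂P, hcomap _ hL₁P] at h2
      exact h2
    -- hence I₂ = I₁ * I₁
    have hI₂eq : I₂ = I₁ * I₁ := by
      have : ((L₂ : Multiset (Ideal R))).prod = ((L₁ : Multiset (Ideal R)) + L₁).prod := by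
        rw [hpull]
      rw [Multiset.prod_coe, Multiset.prod_add, Multiset.prod_coe] at this
      rw [hL₂, hL₁]
      exact this
    -- the element chase : P ≤ P * I₁
    have hPle : P ≤ P * I₁ := by
      intro q hq
      have hq2 : q ∈ I₁ * I₁ := hI₂eq ▸ Ideal.mem_sup_left hq
      have hexp : I₁ * I₁ ≤ P * I₁ ⊔ Ideal.span {a ^ 2} := by
        rw [hI₁, Ideal.mul_sup, Ideal.sup_mul, Ideal.sup_mul]
        refine sup_le (sup_le ?_ ?_) (sup_le ?_ ?_)
        · exact le_sup_of_le_left (Ideal.mul_mono le_rfl le_sup_left)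
        · exact le_sup_of_le_left (mul_comm P (Ideal.span {a}) ▸
            Ideal.mul_mono le_rfl le_sup_right)
        · exact le_sup_of_le_left (Ideal.mul_mono le_rfl le_sup_right)
        · rw [Ideal.span_singleton_mul_span_singleton, ← pow_two]
          exact le_sup_right
      obtain ⟨u, hu, v, hv, huv⟩ := Submodule.mem_sup.mp (hexp hq2)
      obtain ⟨c, hc⟩ := Ideal.mem_span_singleton'.mp hv
      have hvP : v ∈ P := by
        have : v = q - u := by rw [← huv]; ring
        exact this ▸ P.sub_mem hq ((Ideal.mul_le_left : P * I₁ ≤ P) hu)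
      have hcP : c ∈ P := by
        have h2 : c * a * a ∈ P := by rwa [mul_assoc, ← pow_two, hc]
        rcases hP.mem_or_mem h2 with h | h
        · rcases hP.mem_or_mem h with h | h
          exacts [h, absurd h ha]
        · exact absurd h ha
      have : v ∈ P * I₁ := by
        rw [← hc, pow_two, ← mul_assoc]
        exact Ideal.mul_mem_mul (Ideal.mul_mem_right a P hcP)
          (Ideal.mem_sup_right (Ideal.subset_span rfl))
      rw [← huv]
      exact (P * I₁).add_mem hu this
    have hPeq : P * ⊤ = P * I₁ := by
      rw [Ideal.mul_top]
      exact le_antisymm hPle Ideal.mul_le_left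
    exact (inv_cancel hinv hPeq).symm
  refine ⟨⟨hP.ne_top, fun J hJ => ?_⟩⟩
  obtain ⟨a, haJ, haP⟩ := SetLike.exists_of_lt hJ
  rw [eq_top_iff, ← key a haP]
  exact sup_le (le_of_lt hJ) ((Ideal.span_le).mpr (Set.singleton_subset_iff.mpr haJ))


/-- In a ZPI-ring, every regular prime is invertible. -/
lemma inv_of_prime_reg
    (hZPI : ∀ I : Ideal R, I.IsRegularIdeal →
      ∃ L : List (Ideal R), (∀ P ∈ L, P.IsPrime) ∧ I = L.prod)
    {P : Ideal R} (hP : P.IsPrime) (hreg : P.IsRegularIdeal) : Inv P := by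
  obtain ⟨x, hxP, hxreg⟩ := hreg
  obtain ⟨L, hLp, hL⟩ := hZPI (Ideal.span {x}) ⟨x, Ideal.subset_span rfl, hxreg⟩
  have hsinv : Inv ((L : Multiset (Ideal R)).prod) := by
    rw [Multiset.prod_coe, ← hL]; exact inv_span_singleton hxreg
  have hprodle : ((L : Multiset (Ideal R))).prod ≤ P := by
    rw [Multiset.prod_coe, ← hL]
    exact (Ideal.span_le).mpr (Set.singleton_subset_iff.mpr hxP)
  obtain ⟨Q, hQs, hQP⟩ := (Ideal.IsPrime.multiset_prod_le hP).mp hprodle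
  haveI hQprime : Q.IsPrime := hLp Q (by exact_mod_cast hQs)
  have hQreg : Q.IsRegularIdeal := ⟨x, by
    have := multiset_prod_le_of_mem hQs
    rw [Multiset.prod_coe, ← hL] at this
    exact this (Ideal.subset_span rfl), hxreg⟩
  have hQinv : Inv Q := inv_of_mem_prod hQs hsinv
  have hQmax : Q.IsMaximal := inv_prime_maximal hZPI hQprime hQreg hQinv
  rwa [hQmax.eq_of_le hP.ne_top hQP] at hQinv

lemma list_prod_fg (L : List (Ideal R)) (h : ∀ P ∈ L, P.FG) : L.prod.FG := by
  induction L with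
  | nil => exact ⟨{1}, by simp⟩
  | cons P L ih =>
    rw [List.prod_cons]
    exact Submodule.FG.mul (h P (List.mem_cons_self))
      (ih fun Q hQ => h Q (List.mem_cons_of_mem _ hQ))

lemma fg_of_ZPI
    (hZPI : ∀ I : Ideal R, I.IsRegularIdeal →
      ∃ L : List (Ideal R), (∀ P ∈ L, P.IsPrime) ∧ I = L.prod)
    {I : Ideal R} (hreg : I.IsRegularIdeal) : I.FG := by
  obtain ⟨x, hxI, hxreg⟩ := hreg
  obtain ⟨L, hLp, hL⟩ := hZPI I ⟨x, hxI, hxreg⟩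
  rw [hL]
  refine list_prod_fg L fun P hPL => ?_
  have hxP : x ∈ P := by
    have h := multiset_prod_le_of_mem (s := (L : Multiset (Ideal R))) (P := P)
      (by exact_mod_cast hPL)
    rw [Multiset.prod_coe, ← hL] at h
    exact h hxI
  exact fg_of_inv (inv_of_prime_reg hZPI (hLp P hPL) ⟨x, hxP, hxreg⟩)

lemma chain_aux {c : Set (Ideal R)} (hchain : IsChain (· ≤ ·) c) {y : Ideal R} (hy : y ∈ c) :
    ∀ G : Finset R, (∀ a ∈ G, ∃ I ∈ c, a ∈ I) → ∃ I ∈ c, ∀ a ∈ G, a ∈ I := by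
  classical
  intro G
  induction G using Finset.induction with
  | empty => exact fun _ => ⟨y, hy, by simp⟩
  | insert _ _ hnot ih =>
    rename_i a F
    intro hG
    obtain ⟨I₁, hI₁c, hI₁⟩ := ih fun b hb => hG b (Finset.mem_insert_of_mem hb)
    obtain ⟨I₂, hI₂c, hI₂⟩ := hG a (Finset.mem_insert_self a F)
    rcases hchain.total hI₁c hI₂c with h | h
    · exact ⟨I₂, hI₂c, fun b hb => by
        rcases Finset.mem_insert.mp hb with rfl | hb
        exacts [hI₂, h (hI₁ b hb)]⟩
    · exact ⟨I₁, hI₁c, fun b hb => by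
        rcases Finset.mem_insert.mp hb with rfl | hb
        exacts [h hI₂, hI₁ b hb]⟩

/-- ACC via Zorn for regular ideals when all regular ideals are f.g. -/
lemma exists_max_mem (hFG : ∀ I : Ideal R, I.IsRegularIdeal → I.FG)
    {S : Set (Ideal R)} (hS : ∀ I ∈ S, I.IsRegularIdeal) (hne : S.Nonempty) :
    ∃ M ∈ S, ∀ I ∈ S, M ≤ I → I = M := by
  obtain ⟨x₀, hx₀⟩ := hne
  have ih : ∀ c ⊆ S, IsChain (· ≤ ·) c → ∀ y ∈ c, ∃ ub ∈ S, ∀ z ∈ c, z ≤ ub := ?_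
  · obtain ⟨m, -, hm⟩ := zorn_le_nonempty₀ S ih x₀ hx₀
    exact ⟨m, hm.prop, fun I hI hle => le_antisymm (hm.le_of_ge hI hle) hle⟩
  intro c hcS hchain y hyc
  set U : Ideal R := sSup c with hU
  have hyU : y ≤ U := le_sSup hyc
  have hUreg : U.IsRegularIdeal := by
    obtain ⟨a, haI, hareg⟩ := hS y (hcS hyc)
    exact ⟨a, hyU haI, hareg⟩
  obtain ⟨F, hF⟩ := hFG U hUreg
  have hmem : ∀ a ∈ F, ∃ I ∈ c, a ∈ I := by
    intro a ha
    have haU : a ∈ U := by rw [← hF]; exact Ideal.subset_span ha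
    exact (Submodule.mem_sSup_of_directed ⟨y, hyc⟩ (hchain.directedOn)).mp haU
  obtain ⟨I, hIc, hIF⟩ := chain_aux hchain hyc F hmem
  have hUI : U = I := le_antisymm (by rw [← hF]; exact Ideal.span_le.mpr hIF) (le_sSup hIc)
  exact ⟨I, hcS hIc, fun z hz => hUI ▸ le_sSup hz⟩


lemma list_prod_le_of_mem {L : List (Ideal R)} {P : Ideal R} (h : P ∈ L) : L.prod ≤ P := by
  have := multiset_prod_le_of_mem (s := (L : Multiset (Ideal R))) (P := P) (by exact_mod_cast h)
  rwa [Multiset.prod_coe] at this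

/-- determinant trick: if `J = I * J` with `J` f.g. regular, then `I = ⊤`. -/
lemma eq_top_of_self_mul {I J : Ideal R} (hJfg : J.FG) (hJreg : J.IsRegularIdeal)
    (h : J = I * J) : I = ⊤ := by
  have hle : J ≤ I • J := by rw [Ideal.smul_eq_mul, ← h]
  obtain ⟨r, hr1, hr0⟩ :=
    Submodule.exists_sub_one_mem_and_smul_eq_zero_of_fg_of_le_smul I J hJfg hle
  obtain ⟨a, haJ, hareg⟩ := hJreg
  have : r * a = 0 := hr0 a haJ
  have hr : r = 0 := mem_nonZeroDivisors_iff_right.mp hareg r this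
  rw [hr, zero_sub] at hr1
  rw [Ideal.eq_top_iff_one]
  simpa using I.neg_mem hr1

lemma list_prod_pow {L : List (Ideal R)} {M : Ideal R} (h : ∀ H ∈ L, H = M) :
    L.prod = M ^ L.length := by
  induction L with
  | nil => simp
  | cons H L ih =>
    rw [List.prod_cons, List.length_cons, h H (List.mem_cons_self),
      ih fun H' h' => h H' (List.mem_cons_of_mem _ h'), pow_succ, mul_comm]

/-- key structure of a regular maximal ideal in a Marot ISP ring -/
lemma maximal_structure {A : Type*} [CommRing A] (hmarot : IsMarotRing A) (hisp : IsISPRing A)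
    (hFG : ∀ I : Ideal A, I.IsRegularIdeal → I.FG)
    {M : Ideal A} (hMmax : M.IsMaximal) (hMreg : M.IsRegularIdeal) :
    ∃ x ∈ nonZeroDivisors A, x ∈ M ∧ M = Ideal.span {x} ⊔ M * M := by
  have hMfg := hFG M hMreg
  have hMM : M * M ≠ M := by
    intro h
    exact hMmax.ne_top (eq_top_of_self_mul hMfg hMreg h.symm)
  have hx : ∃ x ∈ (M : Set A) ∩ (nonZeroDivisors A : Set A), x ∉ M * M := by
    by_contra h
    push_neg at h
    refine hMM (le_antisymm Ideal.mul_le_right ?_)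
    conv_lhs => rw [hmarot M hMreg]
    exact Ideal.span_le.mpr h
  obtain ⟨x, ⟨hxM, hxreg⟩, hxnsq⟩ := hx
  set I₀ : Ideal A := Ideal.span {x} ⊔ M * M with hI₀def
  have hI₀M : I₀ ≤ M :=
    sup_le (Ideal.span_le.mpr (Set.singleton_subset_iff.mpr hxM)) Ideal.mul_le_right
  have hI₀top : I₀ ≠ ⊤ := fun h => hMmax.ne_top (top_le_iff.mp (h ▸ hI₀M))
  obtain ⟨J, L, hJinv, hLne, hLprop, heq⟩ :=
    hisp I₀ hI₀top ⟨x, Ideal.mem_sup_left (Ideal.subset_span rfl), hxreg⟩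
  have hHM : ∀ H ∈ L, H = M := by
    intro H hH
    have hM2H : M * M ≤ H :=
      le_trans le_sup_right (heq ▸ le_trans Ideal.mul_le_right (list_prod_le_of_mem hH))
    have hMH : M ≤ H := by
      intro m hm
      exact ((Ideal.isRadical_iff_pow_one_lt 2 one_lt_two).mp (hLprop H hH).2) m
        (by rw [pow_two]; exact hM2H (Ideal.mul_mem_mul hm hm))
    exact (hMmax.eq_of_le (hLprop H hH).1 hMH).symm
  have hprodM : L.prod = M ^ L.length := list_prod_pow hHM
  have hlen : L.length ≠ 0 := fun h => hLne (List.length_eq_zero_iff.mp h)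
  -- J must be ⊤
  have hJtop : J = ⊤ := by
    by_contra hJtop
    obtain ⟨N, hNmax, hJN⟩ := Ideal.exists_le_maximal J hJtop
    have hMN : M ≤ N := by
      intro m hm
      have h1 : m * m ∈ J := by
        have hMMJ : M * M ≤ J := by
          refine le_trans (le_trans le_sup_right heq.le) Ideal.mul_le_left
        exact hMMJ (Ideal.mul_mem_mul hm hm)
      exact Or.elim (hNmax.isPrime.mem_or_mem (hJN h1)) id id
    have hNM : N = M := (hMmax.eq_of_le hNmax.ne_top hMN).symm
    have : I₀ ≤ M * M := by
      rw [heq, hprodM]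
      calc J * M ^ L.length ≤ M * M ^ L.length := Ideal.mul_mono (hNM ▸ hJN) le_rfl
        _ ≤ M * M := Ideal.mul_mono le_rfl (Ideal.pow_le_self hlen)
    exact hxnsq (this (Ideal.mem_sup_left (Ideal.subset_span rfl)))
  rw [hJtop, Ideal.top_mul, hprodM] at heq
  -- L.length must be 1
  have hlen1 : L.length = 1 := by
    by_contra hlen1
    have h2 : 2 ≤ L.length := by omega
    have : I₀ ≤ M * M := by
      rw [heq]
      calc M ^ L.length ≤ M ^ 2 := Ideal.pow_le_pow_right h2
        _ = M * M := by rw [pow_two]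
    exact hxnsq (this (Ideal.mem_sup_left (Ideal.subset_span rfl)))
  rw [hlen1, pow_one] at heq
  exact ⟨x, hxreg, hxM, heq.symm⟩


variable {A : Type*} [CommRing A]

/-- the submodule `(1 : M)` of the total fraction ring -/
def divOne (M : Ideal A) : Submodule A (FractionRing A) where
  carrier := {k | ∀ a ∈ M, k * algebraMap A (FractionRing A) a ∈ (1 : Submodule A (FractionRing A))}
  add_mem' := by
    intro k1 k2 h1 h2 a ha
    rw [add_mul]
    exact Submodule.add_mem _ (h1 a ha) (h2 a ha)
  zero_mem' := by
    intro a ha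
    rw [zero_mul]
    exact Submodule.zero_mem _
  smul_mem' := by
    intro r k hk a ha
    rw [smul_mul_assoc]
    exact Submodule.smul_mem _ r (hk a ha)

lemma mem_divOne {M : Ideal A} {k : FractionRing A} :
    k ∈ divOne M ↔ ∀ a ∈ M, k * algebraMap A (FractionRing A) a
      ∈ (1 : Submodule A (FractionRing A)) := Iff.rfl

lemma inv_of_maximal_structure {M : Ideal A} {x : A} (hMmax : M.IsMaximal)
    (hxreg : x ∈ nonZeroDivisors A) (hxM : x ∈ M) (hMfg : M.FG)
    (hstr : M = Ideal.span {x} ⊔ M * M) : Inv M := by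
  haveI := hMmax.isPrime
  set Rl := Localization.AtPrime M
  set f : A →+* Rl := algebraMap A Rl with hfdef
  set m : Ideal Rl := M.map f with hmdef
  -- the localized ideal is generated by x
  have hm2 : m ≤ Ideal.span {f x} := by
    have hmeq : m = Ideal.span {f x} ⊔ m * m := by
      have h := congrArg (Ideal.map f) hstr
      rwa [Ideal.map_sup, Ideal.map_mul, Ideal.map_span, Set.image_singleton] at h
    have hjac : m ≤ Ideal.jacobson ⊥ := by
      rw [hmdef, Localization.AtPrime.map_eq_maximalIdeal]
      exact IsLocalRing.maximalIdeal_le_jacobson ⊥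
    refine Submodule.le_of_le_smul_of_le_jacobson_bot (Ideal.FG.map hMfg f) hjac ?_
    rw [Ideal.smul_eq_mul, ← hmeq]
  -- extract a denominator
  have hgen : ∀ g ∈ M, ∃ w, w ∉ M ∧ w * g ∈ Ideal.span {x} := by
    intro g hg
    have : f g ∈ Ideal.span {f x} := hm2 (Ideal.mem_map_of_mem f hg)
    obtain ⟨c, hc⟩ := Ideal.mem_span_singleton'.mp this
    obtain ⟨⟨b, u⟩, hbu⟩ := IsLocalization.mk'_surjective M.primeCompl c
    have hspec : c * f u = f b := by
      rw [← hbu]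
      exact IsLocalization.mk'_spec _ b u
    have : f (b * x) = f (g * u) := by
      rw [map_mul, map_mul, ← hspec, mul_assoc, mul_comm (f u) (f x), ← mul_assoc, hc,
        mul_comm]
    obtain ⟨v, hv⟩ := (IsLocalization.eq_iff_exists M.primeCompl Rl).mp this
    refine ⟨v * u, fun hmem => ?_, ?_⟩
    · rcases hMmax.isPrime.mem_or_mem hmem with h | h
      exacts [v.2 h, u.2 h]
    · refine Ideal.mem_span_singleton'.mpr ⟨v * b, ?_⟩
      have := hv
      push_cast at this
      calc (v : A) * b * x = v * (b * x) := by ring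
        _ = v * (g * u) := by rw [this]
        _ = v * u * g := by ring
  -- a single denominator for all of M
  obtain ⟨G, hG⟩ := hMfg
  have hcomb : ∃ w, w ∉ M ∧ ∀ g ∈ (G : Set A), w * g ∈ Ideal.span {x} := by
    classical
    have : ∀ G' : Finset A, (↑G' : Set A) ⊆ (M : Set A) →
        ∃ w, w ∉ M ∧ ∀ g ∈ (G' : Set A), w * g ∈ Ideal.span {x} := by
      intro G'
      induction G' using Finset.induction with
      | empty => exact fun _ => ⟨1, fun h => hMmax.ne_top ((Ideal.eq_top_iff_one M).mpr h),
          by simp⟩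
      | insert _ _ hnot ih =>
        rename_i a F
        intro hsub
        obtain ⟨w, hwM, hw⟩ := ih fun b hb => hsub (Finset.mem_insert_of_mem hb)
        obtain ⟨wa, hwaM, hwa⟩ := hgen a (hsub (Finset.mem_insert_self a F))
        refine ⟨w * wa, fun h => ?_, ?_⟩
        · rcases hMmax.isPrime.mem_or_mem h with h | h
          exacts [hwM h, hwaM h]
        · intro g hg
          rcases Finset.mem_insert.mp (by exact_mod_cast hg) with rfl | hgF
          · have : w * wa * g = w * (wa * g) := by ring
            rw [this]
            exact Ideal.mul_mem_left _ _ hwa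
          · have : w * wa * g = wa * (w * g) := by ring
            rw [this]
            exact Ideal.mul_mem_left _ _ (hw g hgF)
    refine this G fun b hb => ?_
    rw [← hG]
    exact Ideal.subset_span hb
  obtain ⟨w, hwM, hwG⟩ := hcomb
  have hwall : ∀ y ∈ M, w * y ∈ Ideal.span {x} := by
    intro y hy
    rw [← hG] at hy
    refine Submodule.span_induction ?_ ?_ ?_ ?_ hy
    · exact fun g hg => hwG g hg
    · simp
    · intro y1 y2 _ _ h1 h2
      rw [mul_add]
      exact Ideal.add_mem _ h1 h2
    · intro r y1 _ h1
      rw [smul_eq_mul, show w * (r * y1) = r * (w * y1) by ring]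
      exact Ideal.mul_mem_left _ _ h1
  -- now build the inverse
  set K := FractionRing A
  have hu : IsUnit (algebraMap A K x) := IsLocalization.map_units K ⟨x, hxreg⟩
  set T1 : Submodule A K := coeS M * divOne M with hT1def
  have hT1le : T1 ≤ 1 := by
    rw [hT1def]
    refine Submodule.mul_le.mpr ?_
    intro y hy k hk
    obtain ⟨a, ha, rfl⟩ := mem_coeS.mp hy
    rw [mul_comm]
    exact (mem_divOne.mp hk) a ha
  set C : Ideal A := Submodule.comap (Algebra.ofId A K).toLinearMap T1 with hCdef
  have hMC : M ≤ C := by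
    intro a ha
    have h1 : (1 : K) ∈ divOne M := by
      intro b hb
      rw [one_mul]
      exact Submodule.mem_one.mpr ⟨b, rfl⟩
    have := Submodule.mul_mem_mul (algMap_mem_coeS ha) h1
    rw [mul_one] at this
    exact this
  have hwC : w ∈ C := by
    set k : K := algebraMap A K w * ((hu.unit⁻¹ : _) : K) with hkdef
    have hkT : k ∈ divOne M := by
      intro a ha
      obtain ⟨c, hc⟩ := Ideal.mem_span_singleton'.mp (hwall a ha)
      have hcalc : k * algebraMap A K a
          = algebraMap A K c * (algebraMap A K x * ((hu.unit⁻¹ : _) : K)) := by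
        calc k * algebraMap A K a
            = algebraMap A K w * algebraMap A K a * ((hu.unit⁻¹ : _) : K) := by
              rw [hkdef]; ring
          _ = algebraMap A K (w * a) * ((hu.unit⁻¹ : _) : K) := by rw [map_mul]
          _ = algebraMap A K (c * x) * ((hu.unit⁻¹ : _) : K) := by rw [hc]
          _ = algebraMap A K c * (algebraMap A K x * ((hu.unit⁻¹ : _) : K)) := by
              rw [map_mul, mul_assoc]
      rw [hcalc, hu.mul_val_inv, mul_one]
      exact Submodule.mem_one.mpr ⟨c, rfl⟩
    have hwk : algebraMap A K x * k = algebraMap A K w := by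
      calc algebraMap A K x * k
          = algebraMap A K w * (algebraMap A K x * ((hu.unit⁻¹ : _) : K)) := by
            rw [hkdef]; ring
        _ = algebraMap A K w := by rw [hu.mul_val_inv, mul_one]
    have hmem : algebraMap A K x * k ∈ T1 :=
      Submodule.mul_mem_mul (algMap_mem_coeS hxM) hkT
    rw [hwk] at hmem
    rw [hCdef]
    exact Submodule.mem_comap.mpr (by simpa [Algebra.ofId_apply] using hmem)
  have hCtop : C = ⊤ := by
    by_contra hC
    obtain ⟨N, hNmax, hCN⟩ := Ideal.exists_le_maximal C hC
    by_cases hMN : M ≤ N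
    · have hw' := hCN hwC
      rw [← hMmax.eq_of_le hNmax.ne_top hMN] at hw'
      exact hwM hw'
    · obtain ⟨u, huM, huN⟩ := SetLike.not_le_iff_exists.mp hMN
      exact huN (hCN (hMC huM))
  have h1T : (1 : Submodule A K) ≤ T1 := by
    have h1C : (1 : A) ∈ C := hCtop ▸ Submodule.mem_top
    have h1T1 : (1 : K) ∈ T1 := by
      have := Submodule.mem_comap.mp (hCdef ▸ h1C)
      simpa [Algebra.ofId_apply] using this
    rw [Submodule.one_eq_span, Submodule.span_le, Set.singleton_subset_iff]
    exact h1T1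
  exact ⟨divOne M, le_antisymm hT1le h1T⟩


lemma backward {A : Type*} [CommRing A] (hmarot : IsMarotRing A) (hisp : IsISPRing A)
    (hFG : ∀ I : Ideal A, I.IsRegularIdeal → I.FG) :
    ∀ I : Ideal A, I.IsRegularIdeal →
      ∃ L : List (Ideal A), (∀ P ∈ L, P.IsPrime) ∧ I = L.prod := by
  by_contra hcon
  push_neg at hcon
  obtain ⟨I₀, hI₀reg, hI₀⟩ := hcon
  set S : Set (Ideal A) :=
    {I | I.IsRegularIdeal ∧ ¬∃ L : List (Ideal A), (∀ P ∈ L, P.IsPrime) ∧ I = L.prod} with hSdef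
  have hSne : S.Nonempty := ⟨I₀, hI₀reg, fun ⟨L, hL1, hL2⟩ => hI₀ L hL1 hL2⟩
  obtain ⟨J, ⟨hJreg, hJnf⟩, hJmax⟩ := exists_max_mem hFG (fun I hI => hI.1) hSne
  have hJtop : J ≠ ⊤ := by
    rintro rfl
    exact hJnf ⟨[], by simp, by simp⟩
  obtain ⟨N, hNmax, hJN⟩ := Ideal.exists_le_maximal J hJtop
  have hNreg : N.IsRegularIdeal := by
    obtain ⟨a, haJ, hareg⟩ := hJreg
    exact ⟨a, hJN haJ, hareg⟩
  obtain ⟨x, hxreg, hxN, hstr⟩ := maximal_structure hmarot hisp hFG hNmax hNreg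
  obtain ⟨T, hT⟩ := inv_of_maximal_structure hNmax hxreg hxN (hFG N hNreg) hstr
  set K := FractionRing A
  set W : Submodule A K := coeS J * T with hWdef
  have hWle : W ≤ 1 := by
    rw [hWdef, ← hT]
    exact mul_le_mul' (coeS_mono hJN) le_rfl
  set C : Ideal A := Submodule.comap (Algebra.ofId A K).toLinearMap W with hCdef
  have hCW : coeS C = W := by
    apply le_antisymm
    · exact Submodule.map_comap_le _ _
    · intro w hw
      obtain ⟨a, rfl⟩ := Submodule.mem_one.mp (hWle hw)
      exact algMap_mem_coeS (Submodule.mem_comap.mpr (by simpa [Algebra.ofId_apply] using hw))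
  have hNC : N * C = J := by
    apply coeS_inj
    rw [coeS_mul, hCW, hWdef, show coeS N * (coeS J * T) = coeS N * T * coeS J by ring, hT,
      one_mul]
  have hJC : J ≤ C := by
    have h1 : coeS J ≤ W := by
      have h2 : coeS J = coeS J * coeS N * T := by rw [mul_assoc, hT, mul_one]
      rw [h2, hWdef]
      exact mul_le_mul' (le_trans (mul_le_mul' le_rfl (coeS_le_one N))
        (by rw [mul_one])) le_rfl
    intro a ha
    exact Submodule.mem_comap.mpr (by simpa [Algebra.ofId_apply] using h1 (algMap_mem_coeS ha))
  have hCJ : C ≠ J := by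
    intro h
    rw [h] at hNC
    exact hNmax.ne_top (eq_top_of_self_mul (hFG J hJreg) hJreg hNC.symm)
  have hCreg : C.IsRegularIdeal := by
    obtain ⟨a, haJ, hareg⟩ := hJreg
    exact ⟨a, hJC haJ, hareg⟩
  have hCS : C ∉ S := fun hCS => hCJ (hJmax C hCS hJC)
  have hCfac : ∃ L : List (Ideal A), (∀ P ∈ L, P.IsPrime) ∧ C = L.prod := by
    by_contra h
    exact hCS ⟨hCreg, h⟩
  obtain ⟨L, hLp, hLC⟩ := hCfac
  refine hJnf ⟨N :: L, ?_, ?_⟩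
  · intro P hP
    rcases List.mem_cons.mp hP with rfl | hP
    exacts [hNmax.isPrime, hLp P hP]
  · rw [List.prod_cons, ← hLC, hNC]


end ISPAux

/-- A Marot ring is Dedekind (every regular ideal is a product of prime ideals) if and
only if it is a regular-Noetherian ISP-ring. -/
theorem marot_dedekind_iff_regularNoetherian_isISPRing {A : Type*} [CommRing A]
    (hmarot : IsMarotRing A) :
    (∀ I : Ideal A, I.IsRegularIdeal →
        ∃ L : List (Ideal A), (∀ P ∈ L, P.IsPrime) ∧ I = L.prod) ↔
      (IsISPRing A ∧ ∀ I : Ideal A, I.IsRegularIdeal → I.FG) := by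
  constructor
  · intro hZPI
    refine ⟨?_, fun I hreg => ISPAux.fg_of_ZPI hZPI hreg⟩
    intro I hItop hIreg
    obtain ⟨L, hLp, hL⟩ := hZPI I hIreg
    have hLne : L ≠ [] := by
      rintro rfl
      exact hItop (by simpa using hL)
    refine ⟨⊤, L, ?_, hLne, ?_, by rw [Ideal.top_mul]; exact hL⟩
    · refine ⟨⟨1, Submodule.mem_top, one_mem _⟩, ⟨{1}, by simp⟩, ?_⟩
      intro M hM
      rw [Ideal.map_top]
      exact ⟨⟨1, (Ideal.span_singleton_one).symm⟩⟩
    · exact fun H hH => ⟨(hLp H hH).ne_top, (hLp H hH).isRadical⟩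
  · rintro ⟨hisp, hFG⟩
    exact ISPAux.backward hmarot hisp hFG
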